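/- Let f : ℂ → ℂ be entire and not of the form z ↦ z + c, and suppose f has at least one periodic cycle. Define M_f = inf over cycles P of f of (max_{p ∈ P} |p|) + 1. Let U ⊆ ℂ be open and k ≥ 1 with f^k(U) ⊆ B(w, δ) for some w ∈ ℂ and δ ≤ 1/2, and suppose the closed disc of radius M_f about 0 is contained in U and no point of U lies in the basin of an attracting cycle of f. Then this leads to a contradiction; i.e., U cannot contain the closed disc B̄(0, M_f). -/

import Mathlib

open Filter

/-- `M_f`: infimum over cycles `P` of `f` of `max_{p ∈ P} |p| + 1`. -/
noncomputable def Mf (f : ℂ → ℂ) : ℝ :=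
  sInf {r : ℝ | ∃ (z : ℂ) (k : ℕ), 1 ≤ k ∧ f^[k] z = z ∧
    r = sSup ((fun j => ‖f^[j] z‖) '' Set.Iio k) + 1}

/-- `z` lies in the basin of an attracting cycle of `f`. -/
def InAttractingBasin (f : ℂ → ℂ) (z : ℂ) : Prop :=
  ∃ (w : ℂ) (k : ℕ), 1 ≤ k ∧ f^[k] w = w ∧ ‖deriv (f^[k]) w‖ < 1 ∧
    Tendsto (fun j => (f^[k])^[j] z) atTop (nhds w)

theorem stmt_17 (f : ℂ → ℂ) (U : Set ℂ) (k : ℕ) (w : ℂ) (δ : ℝ)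
    (hf : Differentiable ℂ f)
    (hnotaffine : ¬ ∃ c : ℂ, f = fun z => z + c)
    (hcycle : ∃ (z : ℂ) (j : ℕ), 1 ≤ j ∧ f^[j] z = z)
    (hU : IsOpen U) (hk : 1 ≤ k)
    (hδ0 : 0 < δ) (hδ : δ ≤ 1 / 2)
    (himg : f^[k] '' U ⊆ Metric.ball w δ)
    (hball : Metric.closedBall (0 : ℂ) (Mf f) ⊆ U)
    (hbasin : ∀ z ∈ U, ¬ InAttractingBasin f z) :
    False := by
  classical
  obtain ⟨z0, j0, hj0, hz0⟩ := hcycle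
  set S := {r : ℝ | ∃ (z : ℂ) (k : ℕ), 1 ≤ k ∧ f^[k] z = z ∧
    r = sSup ((fun j => ‖f^[j] z‖) '' Set.Iio k) + 1} with hSdef
  have hne : S.Nonempty := ⟨_, z0, j0, hj0, hz0, rfl⟩
  have hMf : Mf f = sInf S := rfl
  have hlt : sInf S < Mf f + 1 / 4 := by
    rw [hMf]; linarith
  obtain ⟨r, hrS, hr⟩ := exists_lt_of_csInf_lt hne hlt
  obtain ⟨p, j, hj1, hpj, hr_eq⟩ := hrS
  set M := sSup ((fun m => ‖f^[m] p‖) '' Set.Iio j) with hMdef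
  have hM_lt : M < Mf f - 3 / 4 := by rw [hr_eq] at hr; linarith
  have hbdd : BddAbove ((fun m => ‖f^[m] p‖) '' Set.Iio j) :=
    ((Set.finite_Iio j).image _).bddAbove
  -- every iterate of p stays within modulus M
  have horbit : ∀ m : ℕ, ‖f^[m] p‖ ≤ M := by
    intro m
    have h1 : f^[m] p = f^[m % j] p := by
      conv_lhs => rw [← Nat.mod_add_div m j]
      rw [Function.iterate_add_apply, Function.iterate_mul,
        Function.iterate_fixed hpj]
    rw [h1]
    exact le_csSup hbdd ⟨m % j, Nat.mod_lt _ (by omega), rfl⟩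
  have hM0 : 0 ≤ M := le_trans (norm_nonneg _) (horbit 0)
  set g := f^[k] with hgdef
  have hg : Differentiable ℂ g := hf.iterate k
  -- Cauchy estimate: derivative of g at any point of modulus ≤ M is small
  have hderiv_bound : ∀ q : ℂ, ‖q‖ ≤ M → ‖deriv g q‖ ≤ 2 / 3 := by
    intro q hq
    have hbound : ∀ x ∈ Metric.sphere q (3 / 4 : ℝ), ‖g x - w‖ ≤ δ := by
      intro x hx
      have hx' : dist x q = 3 / 4 := hx
      have hxnorm : ‖x‖ ≤ M + 3 / 4 := by
        calc ‖x‖ ≤ ‖q‖ + ‖x - q‖ := by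
              simpa using norm_add_le q (x - q)
          _ = ‖q‖ + dist x q := by rw [dist_eq_norm]
          _ ≤ M + 3 / 4 := by
              rw [hx']
              have : ‖q‖ = ‖q‖ := rfl
              linarith [hq, this ▸ hq]
      have hxU : x ∈ U := by
        apply hball
        rw [Metric.mem_closedBall, dist_zero_right]
        linarith
      have : g x ∈ Metric.ball w δ := himg ⟨x, hxU, rfl⟩
      rw [Metric.mem_ball, dist_eq_norm] at this
      exact this.le
    have hdc : DiffContOnCl ℂ (fun z => g z - w) (Metric.ball q (3 / 4)) :=
      (hg.sub_const w).diffContOnCl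
    have := Complex.norm_deriv_le_of_forall_mem_sphere_norm_le
      (by norm_num : (0 : ℝ) < 3 / 4) hdc hbound
    have hd : deriv (fun z => g z - w) q = deriv g q := by
      simp [deriv_sub_const]
    rw [hd] at this
    calc ‖deriv g q‖ ≤ δ / (3 / 4) := this
      _ ≤ (1 / 2) / (3 / 4) := by
          apply div_le_div_of_nonneg_right hδ  -- may need correct lemma
          norm_num
      _ ≤ 2 / 3 := by norm_num
  -- chain rule along the orbit
  have hchain : ∀ i : ℕ,
      HasDerivAt (g^[i]) (∏ m ∈ Finset.range i, deriv g (g^[m] p)) p := by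
    intro i
    induction i with
    | zero => simpa using (hasDerivAt_id p)
    | succ i ih =>
        rw [Function.iterate_succ']
        have h1 : HasDerivAt g (deriv g (g^[i] p)) (g^[i] p) :=
          (hg (g^[i] p)).hasDerivAt
        have h2 := h1.comp p ih
        rw [Finset.prod_range_succ]
        rw [mul_comm]
        exact h2
  have hfix : f^[k * j] p = p := by
    rw [mul_comm, Function.iterate_mul]
    exact Function.iterate_fixed hpj k
  have hgj : f^[k * j] = g^[j] := Function.iterate_mul f k j
  have hderivprod : deriv (f^[k * j]) p
      = ∏ m ∈ Finset.range j, deriv g (g^[m] p) := by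
    rw [hgj]; exact (hchain j).deriv
  have hsmall : ‖deriv (f^[k * j]) p‖ < 1 := by
    rw [hderivprod]
    have habs : ‖∏ m ∈ Finset.range j, deriv g (g^[m] p)‖
        = ∏ m ∈ Finset.range j, ‖deriv g (g^[m] p)‖ :=
      norm_prod _ _
    rw [habs]
    have hle : ∏ m ∈ Finset.range j, ‖deriv g (g^[m] p)‖
        ≤ (2 / 3 : ℝ) ^ j := by
      calc ∏ m ∈ Finset.range j, ‖deriv g (g^[m] p)‖
          ≤ ∏ _m ∈ Finset.range j, (2 / 3 : ℝ) := by
            apply Finset.prod_le_prod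
            · intro i _; exact norm_nonneg _
            · intro i _
              have : ‖g^[i] p‖ ≤ M := by
                have h' : g^[i] p = f^[k * i] p := by rw [Function.iterate_mul]
                rw [h']; exact horbit (k * i)
              exact hderiv_bound _ this
        _ = (2 / 3 : ℝ) ^ j := by simp [div_pow]
    have : (2 / 3 : ℝ) ^ j < 1 :=
      pow_lt_one₀ (by norm_num) (by norm_num) (by omega)
    linarith
  have hpU : p ∈ U := by
    apply hball
    rw [Metric.mem_closedBall, dist_zero_right]
    have : ‖p‖ = ‖p‖ := rfl
    have := horbit 0
    simp only [Function.iterate_zero, id_eq] at this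
    linarith
  apply hbasin p hpU
  refine ⟨p, k * j, Nat.mul_pos hk hj1, hfix, hsmall, ?_⟩
  have : ∀ n : ℕ, (f^[k * j])^[n] p = p := fun n => Function.iterate_fixed hfix n
  simp only [this]
  exact tendsto_const_nhds
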